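/- arXiv:math/9802121 — 3 statements merged into one kernel-verified Lean document; each statement's English description precedes it below -/
import Mathlib

section
/- For all x ∈ ℝ, log(Σ_{n∈ℤ} e^{−π n² e^{−2x}}) ≤ max(0, x) + log(Σ_{n∈ℤ} e^{−π n²}). -/
open Real

lemma theta_summable {t : ℝ} (ht : 0 < t) :
    Summable fun n : ℤ => Real.exp (-π * n ^ 2 * t) := by
  have hg : Summable fun n : ℕ => Real.exp ((n : ℝ) * (-(π * t))) :=
    Real.summable_exp_nat_mul_iff.mpr (neg_lt_zero.mpr (by positivity))
  have key : Summable fun n : ℕ => Real.exp (-π * n ^ 2 * t) := by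
    refine hg.of_nonneg_of_le (fun n => (Real.exp_pos _).le) (fun n => ?_)
    · apply Real.exp_le_exp.mpr
      have hn : (n : ℝ) ≤ (n : ℝ) ^ 2 := by
        exact_mod_cast Nat.cast_le.mpr (Nat.le_self_pow two_ne_zero n)
      nlinarith [mul_pos pi_pos ht]
  apply Summable.of_nat_of_neg <;> simpa using key

lemma theta_ge_one {t : ℝ} (ht : 0 < t) :
    1 ≤ ∑' n : ℤ, Real.exp (-π * n ^ 2 * t) := by
  have := Summable.le_tsum (theta_summable ht) 0 (fun n _ => (Real.exp_pos _).le)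
  simpa using this

lemma theta_mono {s t : ℝ} (hs : 0 < s) (hst : s ≤ t) :
    (∑' n : ℤ, Real.exp (-π * n ^ 2 * t)) ≤ ∑' n : ℤ, Real.exp (-π * n ^ 2 * s) := by
  apply Summable.tsum_le_tsum _ (theta_summable (hs.trans_le hst)) (theta_summable hs)
  intro n
  apply Real.exp_le_exp.mpr
  have : (0:ℝ) ≤ π * n ^ 2 := by positivity
  nlinarith

/-- For all real `x`,
`log (∑_{n ∈ ℤ} e^{-π n² e^{-2x}}) ≤ max 0 x + log (∑_{n ∈ ℤ} e^{-π n²})`. -/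
theorem hzero_le_max_add (x : ℝ) :
    Real.log (∑' n : ℤ, Real.exp (-π * n ^ 2 * Real.exp (-2 * x))) ≤
      max 0 x + Real.log (∑' n : ℤ, Real.exp (-π * n ^ 2)) := by
  have h1 : (∑' n : ℤ, Real.exp (-π * n ^ 2)) = ∑' n : ℤ, Real.exp (-π * n ^ 2 * 1) := by
    simp
  rcases le_or_gt x 0 with hx | hx
  · rw [max_eq_left hx, zero_add]
    apply Real.log_le_log (by linarith [theta_ge_one (t := Real.exp (-2*x)) (Real.exp_pos _)])
    rw [h1]
    exact theta_mono one_pos (Real.one_le_exp (by linarith))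
  · rw [max_eq_right hx.le]
    -- functional equation: θ(e^{-2x}) = e^x θ(e^{2x})
    have hfe := Real.tsum_exp_neg_mul_int_sq (a := Real.exp (-2*x)) (Real.exp_pos _)
    have h2 : ∀ n : ℤ, -π * Real.exp (-2*x) * (n:ℝ)^2 = -π * n^2 * Real.exp (-2*x) := by
      intro n; ring
    have h3 : ∀ n : ℤ, -π / Real.exp (-2*x) * (n:ℝ)^2 = -π * n^2 * Real.exp (2*x) := by
      intro n
      rw [div_eq_mul_inv, ← Real.exp_neg]
      ring_nf
    simp only [h2, h3] at hfe
    have hpow : (1:ℝ) / Real.exp (-2*x) ^ ((1:ℝ)/2) = Real.exp x := by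
      rw [Real.rpow_def_of_pos (Real.exp_pos _), Real.log_exp,
        show (-2*x)*((1:ℝ)/2) = -x by ring, Real.exp_neg, one_div, inv_inv]
    rw [hpow] at hfe
    rw [hfe, Real.log_mul (Real.exp_ne_zero x)
      (by linarith [theta_ge_one (t := Real.exp (2*x)) (Real.exp_pos _)]), Real.log_exp]
    refine add_le_add_right ?_ x
    rw [h1]
    exact Real.log_le_log (by linarith [theta_ge_one (t := Real.exp (2*x)) (Real.exp_pos _)])
      (theta_mono one_pos (Real.one_le_exp (by linarith)))
end

section
/- The function x ↦ Σ_{n∈ℤ} exp(−π n² e^{−2x}) is strictly increasing on ℝ, tends to 1 as x → −∞, and tends to +∞ as x → +∞. -/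
open Real Filter

lemma kzero_aux_summable {t : ℝ} (ht : 0 < t) :
    Summable fun n : ℤ => Real.exp (-π * (n : ℝ) ^ 2 * t) := by
  have key : Summable fun n : ℕ => Real.exp (-π * (n : ℝ) ^ 2 * t) := by
    have hgeom : Summable fun n : ℕ => Real.exp (-π * t) ^ n :=
      summable_geometric_of_lt_one (Real.exp_nonneg _)
        (Real.exp_lt_one_iff.mpr (by nlinarith [Real.pi_pos]))
    refine hgeom.of_nonneg_of_le (fun n => (Real.exp_pos _).le) (fun n => ?_)
    rw [← Real.exp_nat_mul]
    apply Real.exp_le_exp.mpr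
    have hn : (n : ℝ) ≤ (n : ℝ) ^ 2 := by
      have : (n : ℝ) * 1 ≤ (n : ℝ) * (n : ℝ) := by
        rcases Nat.eq_zero_or_pos n with h | h
        · simp [h]
        · have : (1 : ℝ) ≤ n := by exact_mod_cast h
          nlinarith
      nlinarith
    nlinarith [mul_le_mul_of_nonneg_left hn (le_of_lt (mul_pos Real.pi_pos ht))]
  apply Summable.of_nat_of_neg <;> simpa using key

lemma kzero_term_le {s t : ℝ} (hst : s ≤ t) (n : ℤ) :
    Real.exp (-π * (n : ℝ) ^ 2 * t) ≤ Real.exp (-π * (n : ℝ) ^ 2 * s) := by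
  apply Real.exp_le_exp.mpr
  nlinarith [mul_le_mul_of_nonneg_left hst (by positivity : (0:ℝ) ≤ π * (n : ℝ) ^ 2)]

/-- The function `x ↦ ∑_{n ∈ ℤ} exp(-π n² e^{-2x})` is strictly increasing,
tends to `1` as `x → -∞` and to `+∞` as `x → +∞`. -/
theorem kzero_strictMono_and_limits :
    StrictMono (fun x : ℝ => ∑' n : ℤ, Real.exp (-π * n ^ 2 * Real.exp (-2 * x))) ∧
      Tendsto (fun x : ℝ => ∑' n : ℤ, Real.exp (-π * n ^ 2 * Real.exp (-2 * x)))
        atBot (nhds 1) ∧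
      Tendsto (fun x : ℝ => ∑' n : ℤ, Real.exp (-π * n ^ 2 * Real.exp (-2 * x)))
        atTop atTop := by
  refine ⟨?_, ?_, ?_⟩
  · -- strict monotonicity
    intro x y hxy
    have hst : Real.exp (-2 * y) < Real.exp (-2 * x) := by
      apply Real.exp_lt_exp.mpr; linarith
    refine Summable.tsum_lt_tsum (i := (1 : ℤ)) (fun n => kzero_term_le hst.le n) ?_
      (kzero_aux_summable (Real.exp_pos _)) (kzero_aux_summable (Real.exp_pos _))
    apply Real.exp_lt_exp.mpr
    push_cast
    nlinarith [Real.pi_pos]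
  · -- limit at -∞
    have key : Tendsto
        (fun x : ℝ => ∑' n : ℤ, Real.exp (-π * (n : ℝ) ^ 2 * Real.exp (-2 * x)))
        atBot (nhds (∑' n : ℤ, if n = 0 then (1 : ℝ) else 0)) := by
      apply tendsto_tsum_of_dominated_convergence
        (bound := fun n : ℤ => Real.exp (-π * (n : ℝ) ^ 2 * 1))
      · exact kzero_aux_summable one_pos
      · intro k
        rcases eq_or_ne k 0 with hk | hk
        · simp only [hk, Int.cast_zero, ne_eq, OfNat.ofNat_ne_zero,
            not_false_eq_true, zero_pow, mul_zero, zero_mul, Real.exp_zero, if_true]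
          exact tendsto_const_nhds
        · simp only [hk, if_neg, if_false]
          have hlt : -π * (k : ℝ) ^ 2 < 0 := by
            have : (0 : ℝ) < (k : ℝ) ^ 2 := by positivity
            nlinarith [Real.pi_pos]
          have h1 : Tendsto (fun x : ℝ => Real.exp (-2 * x)) atBot atTop := by
            apply Real.tendsto_exp_atTop.comp
            exact (tendsto_const_mul_atTop_of_neg (by norm_num : (-2 : ℝ) < 0)).mpr tendsto_id
          have h2 : Tendsto (fun x : ℝ => -π * (k : ℝ) ^ 2 * Real.exp (-2 * x))
              atBot atBot := by
            exact (tendsto_const_mul_atBot_of_neg hlt).mpr h1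
          exact Real.tendsto_exp_atBot.comp h2
      · filter_upwards [eventually_le_atBot (0 : ℝ)] with x hx
        intro k
        rw [Real.norm_eq_abs, abs_of_pos (Real.exp_pos _)]
        apply kzero_term_le
        rw [← Real.exp_zero]
        apply Real.exp_le_exp.mpr
        linarith
    simpa [tsum_ite_eq] using key
  · -- limit at +∞
    rw [tendsto_atTop]
    intro b
    set N : ℕ := ⌈b⌉₊ + 1 with hN
    set s : Finset ℤ := Finset.Icc (1 : ℤ) (N : ℤ) with hs
    have hcard : (s.card : ℝ) = N := by
      simp [hs, Int.card_Icc]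
    have hbN : b < (s.card : ℝ) := by
      rw [hcard]
      calc b ≤ ⌈b⌉₊ := Nat.le_ceil b
        _ < (N : ℝ) := by rw [hN]; push_cast; linarith
    have hfin : Tendsto
        (fun x : ℝ => ∑ n ∈ s, Real.exp (-π * (n : ℝ) ^ 2 * Real.exp (-2 * x)))
        atTop (nhds (s.card : ℝ)) := by
      have : Tendsto
          (fun x : ℝ => ∑ n ∈ s, Real.exp (-π * (n : ℝ) ^ 2 * Real.exp (-2 * x)))
          atTop (nhds (∑ _n ∈ s, (1 : ℝ))) := by
        apply tendsto_finset_sum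
        intro n _
        have h0 : Tendsto (fun x : ℝ => Real.exp (-2 * x)) atTop (nhds 0) := by
          apply Real.tendsto_exp_atBot.comp
          exact (tendsto_const_mul_atBot_of_neg (by norm_num : (-2 : ℝ) < 0)).mpr tendsto_id
        have h1 : Tendsto (fun x : ℝ => -π * (n : ℝ) ^ 2 * Real.exp (-2 * x))
            atTop (nhds 0) := by
          have := h0.const_mul (-π * (n : ℝ) ^ 2)
          simp only [mul_zero] at this
          exact this
        have := (Real.continuous_exp.tendsto 0).comp h1
        simpa [Real.exp_zero, Function.comp_def] using this
      simpa using this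
    have hev : ∀ᶠ x : ℝ in atTop,
        b < ∑ n ∈ s, Real.exp (-π * (n : ℝ) ^ 2 * Real.exp (-2 * x)) :=
      hfin.eventually (eventually_gt_nhds hbN)
    filter_upwards [hev] with x hx
    have hle : ∑ n ∈ s, Real.exp (-π * (n : ℝ) ^ 2 * Real.exp (-2 * x)) ≤
        ∑' n : ℤ, Real.exp (-π * (n : ℝ) ^ 2 * Real.exp (-2 * x)) :=
      (kzero_aux_summable (Real.exp_pos _)).sum_le_tsum s (fun n _ => (Real.exp_pos _).le)
    linarith
end

section
/- For x < 0, 0 < log(Σ_{n∈ℤ} e^{−π n² e^{−2x}}) ≤ Σ_{n∈ℤ, n≠0} e^{−π n² e^{−2x}} ≤ C · e^{−π e^{−2x}} where C = Σ_{n∈ℤ, n≠0} e^{−π(n²−1)} is a finite constant; in particular h⁰(D_x) → 0 doubly exponentially fast as x → −∞. -/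
open Real

lemma summable_exp_neg_sq_int {c : ℝ} (hc : 0 < c) :
    Summable fun n : ℤ => Real.exp (-c * (n : ℝ) ^ 2) := by
  have hnat : Summable fun n : ℕ => Real.exp (-c * (n : ℝ) ^ 2) := by
    refine Summable.of_nonneg_of_le (fun n => (exp_pos _).le) (fun n => ?_)
      (summable_geometric_of_lt_one (exp_pos _).le (exp_lt_one_iff.2 (show -c < 0 by linarith)))
    · rw [← Real.exp_nat_mul]
      apply Real.exp_le_exp.2
      have h1 : (n : ℝ) ≤ (n : ℝ) ^ 2 := by
        exact_mod_cast Nat.le_self_pow two_ne_zero n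
      nlinarith [mul_nonneg hc.le (sub_nonneg.2 h1)]
  apply Summable.of_nat_of_neg <;> simpa using hnat

/-- For `x < 0`:
`0 < log (∑_{n∈ℤ} e^{-π n² e^{-2x}}) ≤ ∑_{n≠0} e^{-π n² e^{-2x}} ≤ C e^{-π e^{-2x}}`
where `C = ∑_{n≠0} e^{-π (n²-1)}` is finite; so `h⁰(D_x) → 0` doubly exponentially. -/
theorem hzero_doubly_exponential_decay (x : ℝ) (hx : x < 0) :
    Summable (fun n : {n : ℤ // n ≠ 0} => Real.exp (-π * ((n : ℤ) ^ 2 - 1))) ∧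
      0 < Real.log (∑' n : ℤ, Real.exp (-π * n ^ 2 * Real.exp (-2 * x))) ∧
      Real.log (∑' n : ℤ, Real.exp (-π * n ^ 2 * Real.exp (-2 * x))) ≤
        (∑' n : {n : ℤ // n ≠ 0}, Real.exp (-π * (n : ℤ) ^ 2 * Real.exp (-2 * x))) ∧
      (∑' n : {n : ℤ // n ≠ 0}, Real.exp (-π * (n : ℤ) ^ 2 * Real.exp (-2 * x))) ≤
        (∑' n : {n : ℤ // n ≠ 0}, Real.exp (-π * ((n : ℤ) ^ 2 - 1))) *
          Real.exp (-π * Real.exp (-2 * x)) := by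
  set t : ℝ := Real.exp (-2 * x) with ht_def
  have ht1 : 1 < t := by
    rw [ht_def, ← Real.exp_zero]
    exact Real.exp_lt_exp.2 (by linarith)
  have ht0 : 0 < t := by linarith
  -- summability of the full theta series
  have hSf : Summable fun n : ℤ => Real.exp (-π * (n : ℝ) ^ 2 * t) := by
    have := summable_exp_neg_sq_int (c := π * t) (by positivity)
    convert this using 2 with n
    ring_nf
  -- summability of C
  have hC : Summable (fun n : {n : ℤ // n ≠ 0} => Real.exp (-π * ((n : ℤ) ^ 2 - 1))) := by
    have h1 : Summable fun n : ℤ => Real.exp (-π * ((n : ℤ) ^ 2 - 1)) := by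
      have := (summable_exp_neg_sq_int (c := π) pi_pos).mul_left (Real.exp π)
      convert this using 2 with n
      · rfl
      rw [← Real.exp_add]; ring_nf
    exact h1.subtype _
  refine ⟨hC, ?_⟩
  -- subtype summability of f
  have hSf' : Summable fun n : {n : ℤ // n ≠ 0} => Real.exp (-π * ((n : ℤ) : ℝ) ^ 2 * t) :=
    hSf.subtype _
  -- split the tsum
  have hsplit : (∑' n : ℤ, Real.exp (-π * (n : ℝ) ^ 2 * t)) =
      1 + ∑' n : {n : ℤ // n ≠ 0}, Real.exp (-π * ((n : ℤ) : ℝ) ^ 2 * t) := by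
    have h := Summable.tsum_subtype_add_tsum_subtype_compl hSf ({0} : Set ℤ)
    have hset : (({0} : Set ℤ)ᶜ) = {n : ℤ | n ≠ 0} := by ext n; simp
    rw [← h, tsum_singleton (0 : ℤ) (fun n : ℤ => Real.exp (-π * (n : ℝ) ^ 2 * t)), hset]
    congr 1
    · simp
  set T := ∑' n : {n : ℤ // n ≠ 0}, Real.exp (-π * ((n : ℤ) : ℝ) ^ 2 * t) with hT
  have hTpos : 0 < T := by
    refine Summable.tsum_pos hSf' (fun i => (exp_pos _).le) ⟨1, one_ne_zero⟩ (exp_pos _)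
  have hS1 : 1 < ∑' n : ℤ, Real.exp (-π * (n : ℝ) ^ 2 * t) := by
    rw [hsplit]; linarith
  refine ⟨Real.log_pos hS1, ?_, ?_⟩
  · calc Real.log (∑' n : ℤ, Real.exp (-π * (n : ℝ) ^ 2 * t))
        ≤ (∑' n : ℤ, Real.exp (-π * (n : ℝ) ^ 2 * t)) - 1 :=
          Real.log_le_sub_one_of_pos (by linarith)
      _ = T := by rw [hsplit]; ring
  · rw [← tsum_mul_right]
    refine Summable.tsum_le_tsum ?_ hSf' (hC.mul_right _)
    rintro ⟨n, hn⟩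
    rw [← Real.exp_add]
    apply Real.exp_le_exp.2
    have hn2 : (1 : ℝ) ≤ ((n : ℤ) : ℝ) ^ 2 := by
      have : (1 : ℤ) ≤ n ^ 2 := by
        rcases lt_or_gt_of_ne hn with h | h <;> nlinarith
      exact_mod_cast this
    nlinarith [mul_nonneg (mul_nonneg pi_pos.le
      (by linarith : (0:ℝ) ≤ ((n : ℤ) : ℝ) ^ 2 - 1)) (by linarith : (0:ℝ) ≤ t - 1)]
end
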